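/- For all real numbers a, b with a·b > 0, the integral below converges and 2 ∫_0^∞ e^{−π( a²/t² + b² t² )} · ( a/t + b·t ) dt/t = 2 · sgn(a) · e^{−2π a b}. -/

import Mathlib

open MeasureTheory Real Set

lemma key_aux (A B : ℝ) (hA : 0 < A) (hB : 0 < B) :
    IntegrableOn
      (fun t : ℝ => Real.exp (-Real.pi * (A ^ 2 / t ^ 2 + B ^ 2 * t ^ 2)) * (A / t + B * t) / t)
      (Set.Ioi 0) ∧
    ∫ t in Set.Ioi (0 : ℝ),
        Real.exp (-Real.pi * (A ^ 2 / t ^ 2 + B ^ 2 * t ^ 2)) * (A / t + B * t) / t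
      = Real.exp (-2 * Real.pi * A * B) := by
  set f : ℝ → ℝ := fun t => B * t - A / t with hf
  set f' : ℝ → ℝ := fun t => B + A / t ^ 2 with hf'
  have hderiv : ∀ t ∈ Ioi (0:ℝ), HasDerivWithinAt f (f' t) (Ioi 0) t := by
    intro t ht
    have ht' : t ≠ 0 := ne_of_gt ht
    have h1 : HasDerivAt f (B * 1 - (0 * t - A * 1) / t ^ 2) t := by
      exact ((hasDerivAt_id t).const_mul B).sub ((hasDerivAt_const t A).div (hasDerivAt_id t) ht')
    have : B * 1 - (0 * t - A * 1) / t ^ 2 = f' t := by show B * 1 - (0 * t - A * 1) / t ^ 2 = B + A / t ^ 2; ring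
    exact (this ▸ h1).hasDerivWithinAt
  have hmono : StrictMonoOn f (Ioi 0) := by
    intro x hx y hy hxy
    have hx0 : (0:ℝ) < x := hx
    have hy0 : (0:ℝ) < y := hy
    simp only [hf]
    have : A / y < A / x := by
      apply div_lt_div_of_pos_left hA hx0 hxy
    nlinarith [mul_lt_mul_of_pos_left hxy hB]
  have hinj : InjOn f (Ioi 0) := hmono.injOn
  have himg : f '' Ioi 0 = univ := by
    apply eq_univ_of_forall
    intro y
    set s := Real.sqrt (y ^ 2 + 4 * A * B) with hs
    have hs2 : s ^ 2 = y ^ 2 + 4 * A * B := by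
      rw [hs, Real.sq_sqrt]; nlinarith
    have hsy : |y| < s := by
      have : |y| = Real.sqrt (y ^ 2) := (Real.sqrt_sq_eq_abs y).symm
      rw [this, hs]
      apply Real.sqrt_lt_sqrt (sq_nonneg y); nlinarith
    have hts : 0 < y + s := by
      have := neg_abs_le y; linarith
    refine ⟨(y + s) / (2 * B), Set.mem_Ioi.mpr (by positivity), ?_⟩
    have h2B : (2 * B) ≠ 0 := by positivity
    simp only [hf]
    field_simp
    nlinarith [hs2]
  have hgauss : Integrable (fun u : ℝ => Real.exp (-Real.pi * u ^ 2)) :=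
    integrable_exp_neg_mul_sq Real.pi_pos
  have heq : EqOn
      (fun t : ℝ => Real.exp (-Real.pi * (A ^ 2 / t ^ 2 + B ^ 2 * t ^ 2)) * (A / t + B * t) / t)
      (fun t : ℝ => Real.exp (-2 * Real.pi * A * B) • (|f' t| • Real.exp (-Real.pi * (f t) ^ 2)))
      (Ioi 0) := by
    intro t ht
    have ht0 : (0:ℝ) < t := ht
    have ht' : t ≠ 0 := ne_of_gt ht0
    have habs : |f' t| = B + A / t ^ 2 := by
      rw [abs_of_pos]; simp only [hf']; positivity
    simp only [smul_eq_mul, habs, hf, hf']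
    have hexp : Real.exp (-Real.pi * (B * t - A / t) ^ 2)
        = Real.exp (-Real.pi * (A ^ 2 / t ^ 2 + B ^ 2 * t ^ 2)) * Real.exp (2 * Real.pi * A * B) := by
      rw [← Real.exp_add]; congr 1; field_simp; ring
    have e1 : Real.exp (-2 * Real.pi * A * B) * Real.exp (2 * Real.pi * A * B) = 1 := by
      rw [← Real.exp_add]; norm_num
    have e2 : (A / t + B * t) / t = B + A / t ^ 2 := by field_simp; ring
    rw [hexp, mul_div_assoc, e2]
    rw [abs_of_pos (by positivity : (0:ℝ) < B + A / t ^ 2)]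
    linear_combination (-(B + A / t ^ 2) * Real.exp (-Real.pi * (A ^ 2 / t ^ 2 + B ^ 2 * t ^ 2))) * e1
  constructor
  · have h1 : IntegrableOn (fun u : ℝ => Real.exp (-Real.pi * u ^ 2)) (f '' Ioi 0) := by
      rw [himg]; exact hgauss.integrableOn
    have h2 := (integrableOn_image_iff_integrableOn_abs_deriv_smul measurableSet_Ioi hderiv hinj
      (fun u => Real.exp (-Real.pi * u ^ 2))).mp h1
    exact (IntegrableOn.congr_fun ((h2.smul (Real.exp (-2 * Real.pi * A * B))))
      (fun t ht => (heq ht).symm) measurableSet_Ioi)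
  · rw [setIntegral_congr_fun measurableSet_Ioi heq, integral_smul,
      ← integral_image_eq_integral_abs_deriv_smul measurableSet_Ioi hderiv hinj
        (fun u => Real.exp (-Real.pi * u ^ 2)), himg]
    have : ∫ u : ℝ, Real.exp (-Real.pi * u ^ 2) = 1 := by
      rw [← Measure.restrict_univ (μ := volume)] at *
      simp only [Measure.restrict_univ]
      rw [integral_gaussian, div_self (ne_of_gt Real.pi_pos), Real.sqrt_one]
    rw [Measure.restrict_univ, this]
    simp

/-- The closed-form evaluation of the local archimedean integral `J_σ(𝐱, 0)` for a
component `(a, b)` with `a·b > 0`, the key computation in Proposition 4.12. -/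
theorem local_archimedean_integral_eval (a b : ℝ) (hab : 0 < a * b) :
    IntegrableOn
      (fun t : ℝ => Real.exp (-Real.pi * (a ^ 2 / t ^ 2 + b ^ 2 * t ^ 2)) * (a / t + b * t) / t)
      (Set.Ioi 0) ∧
    2 * ∫ t in Set.Ioi (0 : ℝ),
        Real.exp (-Real.pi * (a ^ 2 / t ^ 2 + b ^ 2 * t ^ 2)) * (a / t + b * t) / t
      = 2 * Real.sign a * Real.exp (-2 * Real.pi * a * b) := by
  rcases lt_trichotomy a 0 with ha | ha | ha
  · have hb : b < 0 := by nlinarith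
    obtain ⟨hint, hval⟩ := key_aux (-a) (-b) (by linarith) (by linarith)
    have heq : ∀ t : ℝ,
        Real.exp (-Real.pi * ((-a) ^ 2 / t ^ 2 + (-b) ^ 2 * t ^ 2)) * (-a / t + -b * t) / t
        = -(Real.exp (-Real.pi * (a ^ 2 / t ^ 2 + b ^ 2 * t ^ 2)) * (a / t + b * t) / t) := by
      intro t; ring_nf
    constructor
    · refine IntegrableOn.congr_fun hint.neg (fun t _ => ?_) measurableSet_Ioi
      simp only [Pi.neg_apply, heq t, neg_neg]
    · have : ∫ t in Set.Ioi (0 : ℝ),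
          Real.exp (-Real.pi * (a ^ 2 / t ^ 2 + b ^ 2 * t ^ 2)) * (a / t + b * t) / t
          = -Real.exp (-2 * Real.pi * (-a) * (-b)) := by
        rw [← hval, ← integral_neg]
        exact setIntegral_congr_fun measurableSet_Ioi (fun t _ => by rw [heq t, neg_neg])
      rw [this, Real.sign_of_neg ha]
      have h2 : -2 * Real.pi * -a * -b = -2 * Real.pi * a * b := by ring
      rw [h2]; ring
  · exact absurd hab (by simp [ha])
  · have hb : 0 < b := by nlinarith
    obtain ⟨hint, hval⟩ := key_aux a b ha hb
    exact ⟨hint, by rw [hval, Real.sign_of_pos ha]; ring⟩
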